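/- Let V, W be finite-dimensional complex vector spaces and let u : V → W and c : W → V be linear maps. Set y := ψ(c ∘ u) ∘ c. Then y = c ∘ ψ(u ∘ c), and y ∘ u + Id_V = exp(2πi·(c ∘ u)) and u ∘ y + Id_W = exp(2πi·(u ∘ c)); in particular both y ∘ u + Id_V and u ∘ y + Id_W are invertible. -/

import Mathlib

open Complex

noncomputable section

/-- The set Σ: complex numbers `α` with `-1 ≤ Re α ≤ 0`, `Im α ≥ 0` if `Re α = -1`,
and `Im α < 0` if `Re α = 0`. -/
def SigmaSet : Set ℂ :=
  {α : ℂ | -1 ≤ α.re ∧ α.re ≤ 0 ∧ (α.re = -1 → 0 ≤ α.im) ∧ (α.re = 0 → α.im < 0)}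

/-- The set Σ₁ := Σ + 1. -/
def Sigma1 : Set ℂ := {α : ℂ | α - 1 ∈ SigmaSet}

/-- The constant `2πi`. -/
def twoPiI : ℂ := 2 * Real.pi * Complex.I

/-- The exponential `exp(2πi·f)` of an endomorphism `f`. -/
def expEnd {E : Type*} [NormedAddCommGroup E] [NormedSpace ℂ E] (f : E →L[ℂ] E) :
    E →L[ℂ] E :=
  NormedSpace.exp (twoPiI • f)

/-- The power series `ψ(A) := ∑_{k=1}^∞ ((2πi)^k / k!) A^(k-1)`. It satisfies
`A·ψ(A) = ψ(A)·A = exp(2πi·A) − Id`. -/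
def psiEnd {E : Type*} [NormedAddCommGroup E] [NormedSpace ℂ E] (A : E →L[ℂ] E) :
    E →L[ℂ] E :=
  ∑' k : ℕ, ((twoPiI ^ (k + 1) / (Nat.factorial (k + 1) : ℂ)) • A ^ k)

section Aux

variable {E : Type*} [NormedAddCommGroup E] [NormedSpace ℂ E] [CompleteSpace E]

set_option maxHeartbeats 1000000 in
lemma psi_summable (A : E →L[ℂ] E) :
    Summable fun k : ℕ => (twoPiI ^ (k + 1) / (Nat.factorial (k + 1) : ℂ)) • A ^ k := by
  apply Summable.of_norm
  have h : Summable fun k : ℕ => ‖twoPiI‖ * ((‖twoPiI‖ * ‖A‖) ^ k / (Nat.factorial k : ℝ)) :=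
    (Real.summable_pow_div_factorial _).mul_left _
  refine h.of_nonneg_of_le (fun k => norm_nonneg _) fun k => ?_
  have hAk : ‖A ^ k‖ ≤ ‖A‖ ^ k := by
    cases k with
    | zero => rw [pow_zero, pow_zero]; exact ContinuousLinearMap.norm_id_le
    | succ n => exact norm_pow_le' A n.succ_pos
  calc ‖(twoPiI ^ (k + 1) / (Nat.factorial (k + 1) : ℂ)) • A ^ k‖
      ≤ ‖twoPiI ^ (k + 1) / (Nat.factorial (k + 1) : ℂ)‖ * ‖A ^ k‖ :=
        ContinuousLinearMap.opNorm_smul_le _ _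
    _ = ‖twoPiI‖ ^ (k + 1) / (Nat.factorial (k + 1) : ℝ) * ‖A ^ k‖ := by
        rw [norm_div, norm_pow]
        norm_num
    _ ≤ ‖twoPiI‖ ^ (k + 1) / (Nat.factorial k : ℝ) * ‖A‖ ^ k := by
        have hf : (Nat.factorial k : ℝ) ≤ (Nat.factorial (k + 1) : ℝ) := by
          exact_mod_cast Nat.factorial_le k.le_succ
        have hfp : (0 : ℝ) < (Nat.factorial k : ℝ) := by exact_mod_cast Nat.factorial_pos k
        have h1 : ‖twoPiI‖ ^ (k + 1) / (Nat.factorial (k + 1) : ℝ)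
            ≤ ‖twoPiI‖ ^ (k + 1) / (Nat.factorial k : ℝ) := by
          apply div_le_div_of_nonneg_left (by positivity) hfp hf
        exact mul_le_mul h1 hAk (norm_nonneg _) (by positivity)
    _ = ‖twoPiI‖ * ((‖twoPiI‖ * ‖A‖) ^ k / (Nat.factorial k : ℝ)) := by
        rw [mul_pow, pow_succ]; ring

lemma expEnd_eq (A : E →L[ℂ] E) :
    expEnd A = ∑' n : ℕ, (twoPiI ^ n / (Nat.factorial n : ℂ)) • A ^ n := by
  rw [expEnd, NormedSpace.exp_eq_tsum (𝕂 := ℂ)]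
  refine tsum_congr fun n => ?_
  rw [smul_pow, smul_smul]
  congr 1
  rw [div_eq_mul_inv, mul_comm]

lemma psi_shift_summable (A : E →L[ℂ] E) :
    Summable fun k : ℕ => (twoPiI ^ (k + 1) / (Nat.factorial (k + 1) : ℂ)) • A ^ (k + 1) :=
  ((psi_summable A).mul_right A).congr fun k => by
    rw [smul_mul_assoc, ← pow_succ]

lemma psi_full_summable (A : E →L[ℂ] E) :
    Summable fun n : ℕ => (twoPiI ^ n / (Nat.factorial n : ℂ)) • A ^ n :=
  (summable_nat_add_iff 1).mp (psi_shift_summable A)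

lemma psi_mul (A : E →L[ℂ] E) : psiEnd A * A + 1 = expEnd A := by
  have h2 : psiEnd A * A
      = ∑' k : ℕ, (twoPiI ^ (k + 1) / (Nat.factorial (k + 1) : ℂ)) • A ^ (k + 1) := by
    rw [psiEnd, ← (psi_summable A).tsum_mul_right]
    exact tsum_congr fun k => by rw [smul_mul_assoc, ← pow_succ]
  rw [expEnd_eq, (psi_full_summable A).tsum_eq_zero_add, h2]
  simp [add_comm]

lemma mul_psi (A : E →L[ℂ] E) : A * psiEnd A + 1 = expEnd A := by
  have h2 : A * psiEnd A
      = ∑' k : ℕ, (twoPiI ^ (k + 1) / (Nat.factorial (k + 1) : ℂ)) • A ^ (k + 1) := by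
    rw [psiEnd, ← (psi_summable A).tsum_mul_left]
    exact tsum_congr fun k => by rw [mul_smul_comm, ← pow_succ']
  rw [expEnd_eq, (psi_full_summable A).tsum_eq_zero_add, h2]
  simp [add_comm]

end Aux

lemma pow_comp_eq {V W : Type*} [NormedAddCommGroup V] [NormedSpace ℂ V]
    [NormedAddCommGroup W] [NormedSpace ℂ W]
    (u : V →L[ℂ] W) (c : W →L[ℂ] V) (k : ℕ) :
    ((c.comp u) ^ k).comp c = c.comp ((u.comp c) ^ k) := by
  induction k with
  | zero => simp [ContinuousLinearMap.one_def]
  | succ k ih =>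
    ext x
    have hx := DFunLike.congr_fun ih ((u.comp c) x)
    simp only [ContinuousLinearMap.comp_apply] at hx ⊢
    simp only [pow_succ, ContinuousLinearMap.mul_apply, ContinuousLinearMap.comp_apply]
    rw [hx]

lemma psi_comp_eq {V W : Type*} [NormedAddCommGroup V] [NormedSpace ℂ V] [CompleteSpace V]
    [NormedAddCommGroup W] [NormedSpace ℂ W] [CompleteSpace W]
    (u : V →L[ℂ] W) (c : W →L[ℂ] V) :
    (psiEnd (c.comp u)).comp c = c.comp (psiEnd (u.comp c)) := by
  let L : (V →L[ℂ] V) →L[ℂ] (W →L[ℂ] V) := (ContinuousLinearMap.compL ℂ W V V).flip c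
  let R : (W →L[ℂ] W) →L[ℂ] (W →L[ℂ] V) := ContinuousLinearMap.compL ℂ W W V c
  have hL : (psiEnd (c.comp u)).comp c = L (psiEnd (c.comp u)) := rfl
  have hR : c.comp (psiEnd (u.comp c)) = R (psiEnd (u.comp c)) := rfl
  rw [hL, hR, psiEnd, psiEnd, L.map_tsum (psi_summable _), R.map_tsum (psi_summable _)]
  refine tsum_congr fun k => ?_
  simp only [map_smul, L, R, ContinuousLinearMap.flip_apply, ContinuousLinearMap.compL_apply]
  rw [pow_comp_eq]

/-- For `u : V → W`, `c : W → V` and `y := ψ(c∘u) ∘ c`, one has `y = c ∘ ψ(u∘c)`,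
`y∘u + Id = exp(2πi·(c∘u))`, `u∘y + Id = exp(2πi·(u∘c))`; in particular both
`y∘u + Id` and `u∘y + Id` are invertible. -/
theorem psi_comp_properties
    {V W : Type*} [NormedAddCommGroup V] [NormedSpace ℂ V] [FiniteDimensional ℂ V]
    [NormedAddCommGroup W] [NormedSpace ℂ W] [FiniteDimensional ℂ W]
    (u : V →L[ℂ] W) (c : W →L[ℂ] V) :
    (psiEnd (c.comp u)).comp c = c.comp (psiEnd (u.comp c)) ∧
    ((psiEnd (c.comp u)).comp c).comp u + ContinuousLinearMap.id ℂ V =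
      expEnd (c.comp u) ∧
    u.comp ((psiEnd (c.comp u)).comp c) + ContinuousLinearMap.id ℂ W =
      expEnd (u.comp c) ∧
    IsUnit (((psiEnd (c.comp u)).comp c).comp u + ContinuousLinearMap.id ℂ V) ∧
    IsUnit (u.comp ((psiEnd (c.comp u)).comp c) + ContinuousLinearMap.id ℂ W) := by
  have h1 := psi_comp_eq u c
  have h2 : ((psiEnd (c.comp u)).comp c).comp u + ContinuousLinearMap.id ℂ V =
      expEnd (c.comp u) := by
    rw [ContinuousLinearMap.comp_assoc]
    exact psi_mul (c.comp u)
  have h3 : u.comp ((psiEnd (c.comp u)).comp c) + ContinuousLinearMap.id ℂ W =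
      expEnd (u.comp c) := by
    rw [h1, ← ContinuousLinearMap.comp_assoc]
    exact mul_psi (u.comp c)
  refine ⟨h1, h2, h3, ?_, ?_⟩
  · rw [h2]; exact NormedSpace.isUnit_exp_of_mem_ball (𝕂 := ℂ) ((NormedSpace.expSeries_radius_eq_top ℂ (V →L[ℂ] V)).symm ▸ edist_lt_top _ _)
  · rw [h3]; exact NormedSpace.isUnit_exp_of_mem_ball (𝕂 := ℂ) ((NormedSpace.expSeries_radius_eq_top ℂ (W →L[ℂ] W)).symm ▸ edist_lt_top _ _)
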